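/- For every finite simple graph G, the following are equivalent: (i) G has no pivot-minor isomorphic to P₄; (ii) G has no pivot-minor isomorphic to C₄; (iii) G has no induced subgraph isomorphic to P₄, C₄ or the dart; (iv) every connected component of G is a clique-star. -/

import Mathlib

/-!  Basic notions: local complementation, edge pivot, pivot-equivalence, pivot-minors. -/

variable {V : Type*} {W : Type*}

/-- Local complementation at a vertex `u`: complement the adjacency inside the
neighbourhood of `u`. -/
def localComp (G : SimpleGraph V) (u : V) : SimpleGraph V where
  Adj x y := x ≠ y ∧
    ((G.Adj u x ∧ G.Adj u y ∧ ¬ G.Adj x y) ∨ (¬ (G.Adj u x ∧ G.Adj u y) ∧ G.Adj x y))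
  symm := by
    constructor
    intro x y h
    obtain ⟨hne, h⟩ := h
    refine ⟨hne.symm, ?_⟩
    rw [G.adj_comm y x]
    tauto
  loopless := by
    constructor
    intro x h
    exact h.1 rfl

/-- The edge pivot `G ∧ uv = ((G * u) * v) * u`. -/
def pivotEdge (G : SimpleGraph V) (u v : V) : SimpleGraph V :=
  localComp (localComp (localComp G u) v) u

/-- One pivot step: pivoting along an edge of the graph. -/
def PivotStep (G G' : SimpleGraph V) : Prop :=
  ∃ u v, G.Adj u v ∧ G' = pivotEdge G u v

/-- Two graphs on the same vertex set are pivot-equivalent if one can be obtained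
from the other by a sequence of edge pivots. -/
def PivotEquiv (G G' : SimpleGraph V) : Prop :=
  Relation.ReflTransGen PivotStep G G'

/-- `H` is a pivot-minor of `G` on the vertex subset `s`: `H` is obtained (up to
isomorphism) from `G` by a sequence of edge pivots and deletions of the vertices
outside `s`.  Since pivoting an edge commutes with deleting a vertex not on that
edge, this is equivalent to performing all the edge pivots first and then deleting
the vertices outside `s`, which is how we state it. -/
def HasPivotMinorOn (G : SimpleGraph V) (s : Set V) (H : SimpleGraph W) : Prop :=
  ∃ G' : SimpleGraph V, PivotEquiv G G' ∧ Nonempty ((G'.induce s) ≃g H)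

/-- `G` contains a pivot-minor isomorphic to `H`. -/
def HasPivotMinor (G : SimpleGraph V) (H : SimpleGraph W) : Prop :=
  ∃ s : Set V, HasPivotMinorOn G s H

/-- `G'` is a result of contracting the vertex `v` in `G` (denoted `G/v`):
if `v` is isolated this is `G - v`, and otherwise it is `(G ∧ zv) - v`
for some neighbour `z` of `v` (well defined up to pivot-equivalence). -/
def IsContraction (G : SimpleGraph V) (v : V) (G' : SimpleGraph ↥{u : V | u ≠ v}) : Prop :=
  ((∀ z, ¬ G.Adj v z) ∧ G' = G.induce {u : V | u ≠ v}) ∨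
    (∃ z, G.Adj v z ∧ G' = (pivotEdge G z v).induce {u : V | u ≠ v})

/-- `G` is `H`-pivot-unique: `G` contains a pivot-minor isomorphic to `H` and for
every vertex `v`, at most one of `G - v` and `G / v` contains a pivot-minor
isomorphic to `H`. -/
def PivotUnique (G : SimpleGraph V) (H : SimpleGraph W) : Prop :=
  HasPivotMinor G H ∧
    ∀ v : V, ¬ (HasPivotMinor (G.induce {u : V | u ≠ v}) H ∧
      ∃ G' : SimpleGraph ↥{u : V | u ≠ v}, IsContraction G v G' ∧ HasPivotMinor G' H)

/-- `G` contains an induced subgraph isomorphic to `H`. -/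
def HasInducedSubgraphIso (G : SimpleGraph V) (H : SimpleGraph W) : Prop :=
  ∃ s : Set V, Nonempty ((G.induce s) ≃g H)

/-- The dart: the diamond on `{0,1,2,3}` (all edges except `2-3`) together with a
pendant vertex `4` attached to the degree-3 vertex `0`. -/
def dart : SimpleGraph (Fin 5) :=
  SimpleGraph.fromRel (fun x y =>
    (x.val = 0 ∧ y.val = 1) ∨ (x.val = 0 ∧ y.val = 2) ∨ (x.val = 0 ∧ y.val = 3) ∨
    (x.val = 1 ∧ y.val = 2) ∨ (x.val = 1 ∧ y.val = 3) ∨ (x.val = 0 ∧ y.val = 4))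

/-- A graph is a clique-star if it is a complete graph, or its vertex set can be
partitioned into pairwise disjoint nonempty cliques `K, L₁, …, L_p` (`p ≥ 1`) such
that every vertex of `K` is adjacent to every vertex of `L₁ ∪ ⋯ ∪ L_p` and there
are no edges between distinct cliques `Lᵢ` and `Lⱼ`. -/
def IsCliqueStar {V : Type*} (G : SimpleGraph V) : Prop :=
  G = ⊤ ∨
    ∃ (K : Set V) (Ls : Set (Set V)),
      K.Nonempty ∧ Ls.Nonempty ∧ (∀ L ∈ Ls, L.Nonempty) ∧
      K ∪ ⋃₀ Ls = Set.univ ∧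
      (∀ L ∈ Ls, Disjoint K L) ∧
      (∀ L₁ ∈ Ls, ∀ L₂ ∈ Ls, L₁ ≠ L₂ → Disjoint L₁ L₂) ∧
      G.IsClique K ∧ (∀ L ∈ Ls, G.IsClique L) ∧
      (∀ x ∈ K, ∀ y ∈ ⋃₀ Ls, G.Adj x y) ∧
      (∀ L₁ ∈ Ls, ∀ L₂ ∈ Ls, L₁ ≠ L₂ → ∀ x ∈ L₁, ∀ y ∈ L₂, ¬ G.Adj x y)

section aux
variable {G : SimpleGraph V} {u v x y : V}

lemma localComp_adj : (localComp G u).Adj x y ↔ x ≠ y ∧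
    ((G.Adj u x ∧ G.Adj u y ∧ ¬ G.Adj x y) ∨ (¬ (G.Adj u x ∧ G.Adj u y) ∧ G.Adj x y)) := Iff.rfl

lemma pivot_adj_other (huv : G.Adj u v) (hxu : x ≠ u) (hxv : x ≠ v) (hyu : y ≠ u) (hyv : y ≠ v) :
    (pivotEdge G u v).Adj x y ↔ x ≠ y ∧
      Xor' (G.Adj x y)
        ((G.Adj u x ∨ G.Adj v x) ∧ (G.Adj u y ∨ G.Adj v y) ∧
          ¬((G.Adj u x ↔ G.Adj u y) ∧ (G.Adj v x ↔ G.Adj v y))) := by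
  have h1 : u ≠ v := huv.ne
  have h2 : v ≠ u := huv.ne'
  have h3 : ¬ G.Adj u u := G.irrefl
  have h4 : ¬ G.Adj v v := G.irrefl
  have h5 : G.Adj v u := huv.symm
  simp only [pivotEdge, localComp_adj, Xor']
  by_cases hxy : x = y
  · simp [hxy]
  have h6 : u ≠ x := Ne.symm hxu
  have h7 : v ≠ x := Ne.symm hxv
  have h8 : u ≠ y := Ne.symm hyu
  have h9 : v ≠ y := Ne.symm hyv
  have h10 : y ≠ x := Ne.symm hxy
  by_cases a1 : G.Adj u x <;> by_cases a2 : G.Adj u y <;> by_cases a3 : G.Adj v x <;>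
      by_cases a4 : G.Adj v y <;> by_cases a5 : G.Adj x y <;> simp_all

lemma pivot_adj_left (huv : G.Adj u v) (hyu : y ≠ u) (hyv : y ≠ v) :
    (pivotEdge G u v).Adj u y ↔ G.Adj v y := by
  have h1 : u ≠ v := huv.ne
  have h2 : v ≠ u := huv.ne'
  have h5 : G.Adj v u := huv.symm
  have h6 : u ≠ y := Ne.symm hyu
  have h7 : v ≠ y := Ne.symm hyv
  have h3 : ¬ G.Adj u u := G.irrefl
  have h4 : ¬ G.Adj v v := G.irrefl
  simp only [pivotEdge, localComp_adj]
  by_cases a1 : G.Adj u y <;> by_cases a2 : G.Adj v y <;> simp_all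

lemma pivot_adj_right (huv : G.Adj u v) (hyu : y ≠ u) (hyv : y ≠ v) :
    (pivotEdge G u v).Adj v y ↔ G.Adj u y := by
  have h1 : u ≠ v := huv.ne
  have h2 : v ≠ u := huv.ne'
  have h5 : G.Adj v u := huv.symm
  have h6 : u ≠ y := Ne.symm hyu
  have h7 : v ≠ y := Ne.symm hyv
  have h3 : ¬ G.Adj u u := G.irrefl
  have h4 : ¬ G.Adj v v := G.irrefl
  simp only [pivotEdge, localComp_adj]
  by_cases a1 : G.Adj u y <;> by_cases a2 : G.Adj v y <;> simp_all

lemma pivot_adj_uv (huv : G.Adj u v) : (pivotEdge G u v).Adj u v := by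
  have h1 : u ≠ v := huv.ne
  have h2 : v ≠ u := huv.ne'
  have h5 : G.Adj v u := huv.symm
  have h3 : ¬ G.Adj u u := G.irrefl
  have h4 : ¬ G.Adj v v := G.irrefl
  simp only [pivotEdge, localComp_adj]
  simp_all

/-- induced-P₄ pattern `a-b-c-d`. -/
def P4pat (G : SimpleGraph V) (a b c d : V) : Prop :=
  G.Adj a b ∧ G.Adj b c ∧ G.Adj c d ∧ ¬ G.Adj a c ∧ ¬ G.Adj a d ∧ ¬ G.Adj b d ∧
    a ≠ c ∧ a ≠ d ∧ b ≠ d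

/-- induced-C₄ pattern `a-b-c-d-a`. -/
def C4pat (G : SimpleGraph V) (a b c d : V) : Prop :=
  G.Adj a b ∧ G.Adj b c ∧ G.Adj c d ∧ G.Adj d a ∧ ¬ G.Adj a c ∧ ¬ G.Adj b d ∧
    a ≠ c ∧ b ≠ d

/-- induced-dart pattern. -/
def dartPat (G : SimpleGraph V) (a₀ a₁ a₂ a₃ a₄ : V) : Prop :=
  G.Adj a₀ a₁ ∧ G.Adj a₀ a₂ ∧ G.Adj a₀ a₃ ∧ G.Adj a₁ a₂ ∧ G.Adj a₁ a₃ ∧ G.Adj a₀ a₄ ∧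
    ¬ G.Adj a₂ a₃ ∧ ¬ G.Adj a₁ a₄ ∧ ¬ G.Adj a₂ a₄ ∧ ¬ G.Adj a₃ a₄ ∧
    a₂ ≠ a₃ ∧ a₁ ≠ a₄ ∧ a₂ ≠ a₄ ∧ a₃ ≠ a₄

lemma P4pat_pivot {a b c d : V} (h : P4pat G a b c d) :
    C4pat (pivotEdge G b c) a c b d := by
  obtain ⟨hab, hbc, hcd, hac, had, hbd, hac', had', hbd'⟩ := h
  have hba := hbc.symm.ne'
  have sab := hab.symm
  have sbc := hbc.symm
  have scd := hcd.symm
  have sac : ¬ G.Adj c a := fun h' => hac h'.symm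
  have sad : ¬ G.Adj d a := fun h' => had h'.symm
  have sbd : ¬ G.Adj d b := fun h' => hbd h'.symm
  have hab' : a ≠ b := hab.ne
  have hcd' : c ≠ d := hcd.ne
  have hdb : d ≠ b := Ne.symm hbd'
  have hdc : d ≠ c := Ne.symm hcd'
  have hda : d ≠ a := Ne.symm had'
  have hca : c ≠ a := Ne.symm hac'
  refine ⟨?_, ?_, ?_, ?_, ?_, ?_, hab', hcd'⟩
  · rw [SimpleGraph.adj_comm, pivot_adj_right hbc hab' hac']; tauto
  · rw [SimpleGraph.adj_comm]; exact pivot_adj_uv hbc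
  · rw [pivot_adj_left hbc hdb hdc]; tauto
  · rw [pivot_adj_other hbc hdb hdc hab' hac']; simp only [Xor']; tauto
  · rw [SimpleGraph.adj_comm, pivot_adj_left hbc hab' hac']; tauto
  · rw [pivot_adj_right hbc hdb hdc]; tauto

lemma C4pat_pivot {a b c d : V} (h : C4pat G a b c d) :
    P4pat (pivotEdge G a b) c a b d := by
  obtain ⟨hab, hbc, hcd, hda, hac, hbd, hac', hbd'⟩ := h
  have sab := hab.symm
  have sbc := hbc.symm
  have scd := hcd.symm
  have sda := hda.symm
  have sac : ¬ G.Adj c a := fun h' => hac h'.symm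
  have sbd : ¬ G.Adj d b := fun h' => hbd h'.symm
  have hca : c ≠ a := Ne.symm hac'
  have hcb : c ≠ b := hbc.ne'
  have hdb : d ≠ b := Ne.symm hbd'
  have hda' : d ≠ a := hda.ne
  have hdc : d ≠ c := scd.ne  -- d ≠ c since Adj c d
  refine ⟨?_, ?_, ?_, ?_, ?_, ?_, hcb, Ne.symm hdc, Ne.symm hda'⟩
  · rw [SimpleGraph.adj_comm, pivot_adj_left hab hca hcb]; tauto
  · exact pivot_adj_uv hab
  · rw [pivot_adj_right hab hda' hdb]; tauto
  · rw [SimpleGraph.adj_comm, pivot_adj_right hab hca hcb]; tauto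
  · rw [pivot_adj_other hab hca hcb hda' hdb]; simp only [Xor', Xor]; tauto
  · rw [pivot_adj_left hab hda' hdb]; tauto

lemma dartPat_pivot {a₀ a₁ a₂ a₃ a₄ : V} (h : dartPat G a₀ a₁ a₂ a₃ a₄) :
    C4pat (pivotEdge G a₀ a₁) a₀ a₂ a₄ a₃ := by
  obtain ⟨h01, h02, h03, h12, h13, h04, n23, n14, n24, n34, d23, d14, d24, d34⟩ := h
  have s01 := h01.symm
  have s02 := h02.symm
  have s03 := h03.symm
  have s12 := h12.symm
  have s13 := h13.symm
  have s04 := h04.symm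
  have m23 : ¬ G.Adj a₃ a₂ := fun h' => n23 h'.symm
  have m14 : ¬ G.Adj a₄ a₁ := fun h' => n14 h'.symm
  have m24 : ¬ G.Adj a₄ a₂ := fun h' => n24 h'.symm
  have m34 : ¬ G.Adj a₄ a₃ := fun h' => n34 h'.symm
  have d20 : a₂ ≠ a₀ := h02.ne'
  have d21 : a₂ ≠ a₁ := h12.ne'
  have d30 : a₃ ≠ a₀ := h03.ne'
  have d31 : a₃ ≠ a₁ := h13.ne'
  have d40 : a₄ ≠ a₀ := h04.ne'
  have d41 : a₄ ≠ a₁ := Ne.symm d14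
  have d32 : a₃ ≠ a₂ := Ne.symm d23
  have d42 : a₄ ≠ a₂ := Ne.symm d24
  have d43 : a₄ ≠ a₃ := Ne.symm d34
  refine ⟨?_, ?_, ?_, ?_, ?_, ?_, Ne.symm d40, d23⟩
  · rw [pivot_adj_left h01 d20 d21]; tauto
  · rw [pivot_adj_other h01 d20 d21 d40 d41]; simp only [Xor']; tauto
  · rw [SimpleGraph.adj_comm, pivot_adj_other h01 d30 d31 d40 d41]; simp only [Xor']; tauto
  · rw [SimpleGraph.adj_comm, pivot_adj_left h01 d30 d31]; tauto
  · rw [pivot_adj_left h01 d40 d41]; tauto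
  · rw [pivot_adj_other h01 d20 d21 d30 d31]; simp only [Xor', Xor]; tauto
/-- helper: an adjacency-preserving injection of `Fin n` gives an induced subgraph iso. -/
lemma hasInduced_of_fun {n : ℕ} (H : SimpleGraph (Fin n)) (f : Fin n → V)
    (hf : Function.Injective f) (h : ∀ i j, G.Adj (f i) (f j) ↔ H.Adj i j) :
    HasInducedSubgraphIso G H := by
  refine ⟨Set.range f, ⟨{ toEquiv := (Equiv.ofInjective f hf).symm, map_rel_iff' := ?_ }⟩⟩
  intro a b
  show H.Adj _ _ ↔ G.Adj _ _
  rw [← h]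
  rw [Equiv.apply_ofInjective_symm hf a, Equiv.apply_ofInjective_symm hf b]
  exact Iff.rfl

lemma hasInduced_P4_iff :
    HasInducedSubgraphIso G (SimpleGraph.pathGraph 4) ↔ ∃ a b c d, P4pat G a b c d := by
  constructor
  · rintro ⟨s, ⟨e⟩⟩
    have key : ∀ i j : Fin 4, G.Adj (e.symm i) (e.symm j) ↔ (SimpleGraph.pathGraph 4).Adj i j := by
      intro i j
      exact e.symm.map_rel_iff
    have inj : ∀ i j : Fin 4, (e.symm i : V) = (e.symm j : V) → i = j := by
      intro i j hij
      have := Subtype.ext hij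
      exact e.symm.injective this
    refine ⟨e.symm 0, e.symm 1, e.symm 2, e.symm 3, ?_, ?_, ?_, ?_, ?_, ?_, ?_, ?_, ?_⟩
    · rw [key, SimpleGraph.pathGraph_adj]; decide
    · rw [key, SimpleGraph.pathGraph_adj]; decide
    · rw [key, SimpleGraph.pathGraph_adj]; decide
    · rw [key, SimpleGraph.pathGraph_adj]; decide
    · rw [key, SimpleGraph.pathGraph_adj]; decide
    · rw [key, SimpleGraph.pathGraph_adj]; decide
    · intro h'; exact absurd (inj _ _ h') (by decide)
    · intro h'; exact absurd (inj _ _ h') (by decide)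
    · intro h'; exact absurd (inj _ _ h') (by decide)
  · rintro ⟨a, b, c, d, hab, hbc, hcd, hac, had, hbd, hac', had', hbd'⟩
    have sac : ¬ G.Adj c a := fun h' => hac h'.symm
    have sad : ¬ G.Adj d a := fun h' => had h'.symm
    have sbd : ¬ G.Adj d b := fun h' => hbd h'.symm
    refine hasInduced_of_fun _ (![a, b, c, d]) ?_ ?_
    · intro i j hij
      have hab' : a ≠ b := hab.ne
      have hbc' : b ≠ c := hbc.ne
      have hcd' : c ≠ d := hcd.ne
      fin_cases i <;> fin_cases j <;> simp_all <;> first | rfl | (exact absurd hij (by tauto)) | (exact absurd hij.symm (by tauto))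
    · intro i j
      fin_cases i <;> fin_cases j <;>
        simp [SimpleGraph.pathGraph_adj, hab, hbc, hcd, hac, had, hbd, sac, sad, sbd,
          hab.symm, hbc.symm, hcd.symm, G.irrefl] <;> decide

lemma hasInduced_C4_iff :
    HasInducedSubgraphIso G (SimpleGraph.cycleGraph 4) ↔ ∃ a b c d, C4pat G a b c d := by
  constructor
  · rintro ⟨s, ⟨e⟩⟩
    have key : ∀ i j : Fin 4, G.Adj (e.symm i) (e.symm j) ↔ (SimpleGraph.cycleGraph 4).Adj i j := by
      intro i j
      exact e.symm.map_rel_iff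
    have inj : ∀ i j : Fin 4, (e.symm i : V) = (e.symm j : V) → i = j := by
      intro i j hij
      exact e.symm.injective (Subtype.ext hij)
    refine ⟨e.symm 0, e.symm 1, e.symm 2, e.symm 3, ?_, ?_, ?_, ?_, ?_, ?_, ?_, ?_⟩
    · rw [key, SimpleGraph.cycleGraph_adj]; decide
    · rw [key, SimpleGraph.cycleGraph_adj]; decide
    · rw [key, SimpleGraph.cycleGraph_adj]; decide
    · rw [key, SimpleGraph.cycleGraph_adj]; decide
    · rw [key, SimpleGraph.cycleGraph_adj]; decide
    · rw [key, SimpleGraph.cycleGraph_adj]; decide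
    · intro h'; exact absurd (inj _ _ h') (by decide)
    · intro h'; exact absurd (inj _ _ h') (by decide)
  · rintro ⟨a, b, c, d, hab, hbc, hcd, hda, hac, hbd, hac', hbd'⟩
    have sac : ¬ G.Adj c a := fun h' => hac h'.symm
    have sbd : ¬ G.Adj d b := fun h' => hbd h'.symm
    have hab' : a ≠ b := hab.ne
    have hbc' : b ≠ c := hbc.ne
    have hcd' : c ≠ d := hcd.ne
    have hda' : d ≠ a := hda.ne
    refine hasInduced_of_fun _ (![a, b, c, d]) ?_ ?_
    · intro i j hij
      fin_cases i <;> fin_cases j <;> simp_all <;> first | rfl | (exact absurd hij (by tauto)) | (exact absurd hij.symm (by tauto))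
    · intro i j
      fin_cases i <;> fin_cases j <;>
        simp [SimpleGraph.cycleGraph_adj, hab, hbc, hcd, hda, hac, hbd, sac, sbd,
          hab.symm, hbc.symm, hcd.symm, hda.symm, G.irrefl] <;> decide

lemma hasInduced_dart_iff :
    HasInducedSubgraphIso G dart ↔ ∃ a₀ a₁ a₂ a₃ a₄, dartPat G a₀ a₁ a₂ a₃ a₄ := by
  constructor
  · rintro ⟨s, ⟨e⟩⟩
    have key : ∀ i j : Fin 5, G.Adj (e.symm i) (e.symm j) ↔ dart.Adj i j := by
      intro i j
      exact e.symm.map_rel_iff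
    have inj : ∀ i j : Fin 5, (e.symm i : V) = (e.symm j : V) → i = j := by
      intro i j hij
      exact e.symm.injective (Subtype.ext hij)
    refine ⟨e.symm 0, e.symm 1, e.symm 2, e.symm 3, e.symm 4,
      ?_, ?_, ?_, ?_, ?_, ?_, ?_, ?_, ?_, ?_, ?_, ?_, ?_, ?_⟩
    · rw [key]; unfold dart; rw [SimpleGraph.fromRel_adj]; decide
    · rw [key]; unfold dart; rw [SimpleGraph.fromRel_adj]; decide
    · rw [key]; unfold dart; rw [SimpleGraph.fromRel_adj]; decide
    · rw [key]; unfold dart; rw [SimpleGraph.fromRel_adj]; decide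
    · rw [key]; unfold dart; rw [SimpleGraph.fromRel_adj]; decide
    · rw [key]; unfold dart; rw [SimpleGraph.fromRel_adj]; decide
    · rw [key]; unfold dart; rw [SimpleGraph.fromRel_adj]; decide
    · rw [key]; unfold dart; rw [SimpleGraph.fromRel_adj]; decide
    · rw [key]; unfold dart; rw [SimpleGraph.fromRel_adj]; decide
    · rw [key]; unfold dart; rw [SimpleGraph.fromRel_adj]; decide
    · intro h'; exact absurd (inj _ _ h') (by decide)
    · intro h'; exact absurd (inj _ _ h') (by decide)
    · intro h'; exact absurd (inj _ _ h') (by decide)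
    · intro h'; exact absurd (inj _ _ h') (by decide)
  · rintro ⟨a₀, a₁, a₂, a₃, a₄, h01, h02, h03, h12, h13, h04, n23, n14, n24, n34, d23, d14, d24, d34⟩
    have m23 : ¬ G.Adj a₃ a₂ := fun h' => n23 h'.symm
    have m14 : ¬ G.Adj a₄ a₁ := fun h' => n14 h'.symm
    have m24 : ¬ G.Adj a₄ a₂ := fun h' => n24 h'.symm
    have m34 : ¬ G.Adj a₄ a₃ := fun h' => n34 h'.symm
    have d01 : a₀ ≠ a₁ := h01.ne
    have d02 : a₀ ≠ a₂ := h02.ne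
    have d03 : a₀ ≠ a₃ := h03.ne
    have d04 : a₀ ≠ a₄ := h04.ne
    have d12 : a₁ ≠ a₂ := h12.ne
    have d13 : a₁ ≠ a₃ := h13.ne
    refine hasInduced_of_fun _ (![a₀, a₁, a₂, a₃, a₄]) ?_ ?_
    · intro i j hij
      fin_cases i <;> fin_cases j <;> simp_all <;> first | rfl | (exact absurd hij (by tauto)) | (exact absurd hij.symm (by tauto))
    · intro i j
      fin_cases i <;> fin_cases j <;>
        simp [dart, h01, h02, h03, h12, h13, h04, n23, n14, n24, n34, m23, m14, m24, m34,
          h01.symm, h02.symm, h03.symm, h12.symm, h13.symm, h04.symm, G.irrefl,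
          d01, d02, d03, d04, d12, d13, d23, d14, d24, d34] <;> decide

/-- adjacency on `s` is governed by a "cell" function with centre `k`. -/
def CellRule (G : SimpleGraph V) (s : Set V) (f : V → Set V) (k : Set V) : Prop :=
  ∀ x ∈ s, ∀ y ∈ s, (G.Adj x y ↔ (x ≠ y ∧ (f x = k ∨ f y = k ∨ f x = f y)))

lemma pivot_adj_eq_of_same {s : Set V} {x y : V} (huv : G.Adj u v)
    (hsame : ∀ w ∈ s, w ≠ u → w ≠ v → (G.Adj u w ↔ G.Adj v w))
    (hx : x ∈ s) (hy : y ∈ s) : ((pivotEdge G u v).Adj x y ↔ G.Adj x y) := by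
  have huv' : u ≠ v := huv.ne
  by_cases hxy : x = y
  · subst hxy; simp [SimpleGraph.irrefl]
  by_cases hxu : u = x
  · subst hxu
    by_cases hyv : v = y
    · subst hyv; simp [pivot_adj_uv huv, huv]
    · have hyu : y ≠ u := fun hh => hxy hh.symm
      have hyv' : y ≠ v := Ne.symm hyv
      rw [pivot_adj_left huv hyu hyv', hsame y hy hyu hyv']
  by_cases hxv : v = x
  · subst hxv
    by_cases hyu : u = y
    · subst hyu
      simp [(pivot_adj_uv huv).symm, huv.symm]
    · have hyu' : y ≠ u := Ne.symm hyu
      have hyv : y ≠ v := fun hh => hxy hh.symm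
      rw [pivot_adj_right huv hyu' hyv, ← hsame y hy hyu' hyv]
  · have hxu' : x ≠ u := Ne.symm hxu
    have hxv' : x ≠ v := Ne.symm hxv
    by_cases hyu : u = y
    · subst hyu
      rw [(pivotEdge G u v).adj_comm x u, G.adj_comm x u, pivot_adj_left huv hxu' hxv',
        hsame x hx hxu' hxv']
    by_cases hyv : v = y
    · subst hyv
      rw [(pivotEdge G u v).adj_comm x v, G.adj_comm x v, pivot_adj_right huv hxu' hxv',
        hsame x hx hxu' hxv']
    · have hyu' : y ≠ u := Ne.symm hyu
      have hyv' : y ≠ v := Ne.symm hyv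
      rw [pivot_adj_other huv hxu' hxv' hyu' hyv']
      have h1 := hsame x hx hxu' hxv'
      have h2 := hsame y hy hyu' hyv'
      simp only [Xor', Xor]
      constructor
      · rintro ⟨-, hh⟩; tauto
      · intro hh
        exact ⟨hxy, by tauto⟩

lemma pivotEdge_comm (huv : G.Adj u v) : pivotEdge G u v = pivotEdge G v u := by
  have huv' : u ≠ v := huv.ne
  ext x y
  by_cases hxy : x = y
  · subst hxy; simp [SimpleGraph.irrefl]
  by_cases hxu : u = x
  · subst hxu
    by_cases hyv : v = y
    · subst hyv; simp [pivot_adj_uv huv, (pivot_adj_uv huv.symm).symm]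
    · have hyu : y ≠ u := fun hh => hxy hh.symm
      have hyv' : y ≠ v := Ne.symm hyv
      rw [pivot_adj_left huv hyu hyv', pivot_adj_right huv.symm hyv' hyu]
  by_cases hxv : v = x
  · subst hxv
    by_cases hyu : u = y
    · subst hyu
      simp [(pivot_adj_uv huv).symm, pivot_adj_uv huv.symm]
    · have hyu' : y ≠ u := Ne.symm hyu
      have hyv : y ≠ v := fun hh => hxy hh.symm
      rw [pivot_adj_right huv hyu' hyv, pivot_adj_left huv.symm hyv hyu']
  · have hxu' : x ≠ u := Ne.symm hxu
    have hxv' : x ≠ v := Ne.symm hxv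
    by_cases hyu : u = y
    · subst hyu
      rw [(pivotEdge G u v).adj_comm x u, (pivotEdge G v u).adj_comm x u,
        pivot_adj_left huv hxu' hxv', pivot_adj_right huv.symm hxv' hxu']
    by_cases hyv : v = y
    · subst hyv
      rw [(pivotEdge G u v).adj_comm x v, (pivotEdge G v u).adj_comm x v,
        pivot_adj_right huv hxu' hxv', pivot_adj_left huv.symm hxv' hxu']
    · have hyu' : y ≠ u := Ne.symm hyu
      have hyv' : y ≠ v := Ne.symm hyv
      rw [pivot_adj_other huv hxu' hxv' hyu' hyv', pivot_adj_other huv.symm hxv' hxu' hyv' hyu']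
      have hTT : ((G.Adj u x ∨ G.Adj v x) ∧ (G.Adj u y ∨ G.Adj v y) ∧
            ¬((G.Adj u x ↔ G.Adj u y) ∧ (G.Adj v x ↔ G.Adj v y)))
          ↔ ((G.Adj v x ∨ G.Adj u x) ∧ (G.Adj v y ∨ G.Adj u y) ∧
            ¬((G.Adj v x ↔ G.Adj v y) ∧ (G.Adj u x ↔ G.Adj u y))) := by
        constructor <;> rintro ⟨h1, h2, h3⟩ <;>
          exact ⟨h1.symm, h2.symm, fun hh => h3 ⟨hh.2, hh.1⟩⟩
      rw [hTT]

set_option maxHeartbeats 1000000 in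
lemma cellRule_pivot_case {s : Set V} {f : V → Set V} {k : Set V}
    (h : CellRule G s f k) (hu : u ∈ s) (hv : v ∈ s) (huv : G.Adj u v)
    (hfu : f u = k) (hfv : f v ≠ k) : CellRule (pivotEdge G u v) s f (f v) := by
  have huv' : u ≠ v := huv.ne
  intro x hx y hy
  by_cases hxy : x = y
  · subst hxy; simp [SimpleGraph.irrefl]
  by_cases hxu : u = x
  · subst hxu
    by_cases hyv : v = y
    · subst hyv
      simp [pivot_adj_uv huv, huv']
    · have hyu : y ≠ u := fun hh => hxy hh.symm
      have hyv' : y ≠ v := Ne.symm hyv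
      rw [pivot_adj_left huv hyu hyv', h v hv y hy]
      have n1 : v ≠ y := Ne.symm hyv'
      have n2 : u ≠ y := hxy
      constructor
      · rintro ⟨-, h1 | h1 | h1⟩
        · exact absurd h1 hfv
        · exact ⟨n2, Or.inr (Or.inr (hfu.trans h1.symm))⟩
        · exact ⟨n2, Or.inr (Or.inl h1.symm)⟩
      · rintro ⟨-, h1 | h1 | h1⟩
        · exact absurd (h1.symm.trans hfu) hfv
        · exact ⟨n1, Or.inr (Or.inr h1.symm)⟩
        · exact ⟨n1, Or.inr (Or.inl (h1.symm.trans hfu))⟩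
  by_cases hxv : v = x
  · subst hxv
    by_cases hyu : u = y
    · subst hyu
      have hpa : (pivotEdge G u v).Adj v u := (pivot_adj_uv huv).symm
      simp [hpa, Ne.symm huv']
    · have hyu' : y ≠ u := Ne.symm hyu
      have hyv : y ≠ v := fun hh => hxy hh.symm
      rw [pivot_adj_right huv hyu' hyv, h u hu y hy]
      exact ⟨fun _ => ⟨hxy, Or.inl rfl⟩, fun _ => ⟨hyu, Or.inl hfu⟩⟩
  · have hxu' : x ≠ u := Ne.symm hxu
    have hxv' : x ≠ v := Ne.symm hxv
    by_cases hyu : u = y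
    · subst hyu
      rw [(pivotEdge G u v).adj_comm x u, pivot_adj_left huv hxu' hxv', h v hv x hx]
      have n1 : v ≠ x := hxv
      constructor
      · rintro ⟨-, h1 | h1 | h1⟩
        · exact absurd h1 hfv
        · exact ⟨hxu', Or.inr (Or.inr (h1.trans hfu.symm))⟩
        · exact ⟨hxu', Or.inl h1.symm⟩
      · rintro ⟨-, h1 | h1 | h1⟩
        · exact ⟨n1, Or.inr (Or.inr h1.symm)⟩
        · exact absurd (h1.symm.trans hfu) hfv
        · exact ⟨n1, Or.inr (Or.inl (h1.trans hfu))⟩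
    by_cases hyv : v = y
    · subst hyv
      rw [(pivotEdge G u v).adj_comm x v, pivot_adj_right huv hxu' hxv', h u hu x hx]
      exact ⟨fun _ => ⟨hxv', Or.inr (Or.inl rfl)⟩, fun _ => ⟨hxu, Or.inl hfu⟩⟩
    · have hyu' : y ≠ u := Ne.symm hyu
      have hyv' : y ≠ v := Ne.symm hyv
      rw [pivot_adj_other huv hxu' hxv' hyu' hyv']
      rw [h x hx y hy, h u hu x hx, h u hu y hy, h v hv x hx, h v hv y hy]
      have n1 : u ≠ x := hxu
      have n2 : u ≠ y := hyu
      have n3 : v ≠ x := hxv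
      have n4 : v ≠ y := hyv
      clear h hu hv hy hx huv
      simp only [Xor', hfu, hfv, n1, n2, n3, n4, hxy, ne_eq, not_false_iff, true_and,
        eq_self_iff_true, true_or, or_false, false_or, iff_true, true_iff, not_true, not_false_eq_true]
      by_cases c1 : f x = k <;> by_cases c2 : f y = k <;> by_cases c3 : f x = f y <;>
        by_cases c4 : f v = f x <;> by_cases c5 : f v = f y <;>
        simp_all [eq_comm]

lemma cellRule_pivot {s : Set V} {f : V → Set V} {k : Set V}
    (h : CellRule G s f k) (hu : u ∈ s) (hv : v ∈ s) (huv : G.Adj u v) :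
    ∃ k' : Set V, CellRule (pivotEdge G u v) s f k' := by
  have huv' : u ≠ v := huv.ne
  have hfact := (h u hu v hv).mp huv
  by_cases hfuv : f u = f v
  · refine ⟨k, ?_⟩
    intro x hx y hy
    rw [pivot_adj_eq_of_same huv ?_ hx hy]
    · exact h x hx y hy
    · intro w hw hwu hwv
      rw [h u hu w hw, h v hv w hw, hfuv]
      have n1 : u ≠ w := Ne.symm hwu
      have n2 : v ≠ w := Ne.symm hwv
      simp_all
  · by_cases hfu : f u = k
    · have hfv : f v ≠ k := fun hh => hfuv (hfu.trans hh.symm)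
      exact ⟨f v, cellRule_pivot_case h hu hv huv hfu hfv⟩
    · have hfv : f v = k := by tauto
      rw [pivotEdge_comm huv]
      exact ⟨f u, cellRule_pivot_case h hv hu huv.symm hfv hfu⟩
def NoPat (G : SimpleGraph V) : Prop :=
  (∀ a b c d, ¬ P4pat G a b c d) ∧ (∀ a b c d, ¬ C4pat G a b c d) ∧
    (∀ a b c d e, ¬ dartPat G a b c d e)

section cellfree
variable {s : Set V} {f : V → Set V} {k : Set V} {a b c d e : V}

lemma cellRule_no_P4pat (h : CellRule G s f k) (ha : a ∈ s) (hb : b ∈ s) (hc : c ∈ s)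
    (hd : d ∈ s) : ¬ P4pat G a b c d := by
  rintro ⟨hab, hbc, hcd, hac, had, hbd, hac', had', hbd'⟩
  have h1 : ¬(f a = k ∨ f c = k ∨ f a = f c) := fun hh => hac ((h a ha c hc).mpr ⟨hac', hh⟩)
  have h3 : ¬(f b = k ∨ f d = k ∨ f b = f d) := fun hh => hbd ((h b hb d hd).mpr ⟨hbd', hh⟩)
  push_neg at h1 h3
  rcases ((h a ha b hb).mp hab).2 with k1 | k1 | k1
  · exact h1.1 k1
  · exact h3.1 k1
  · rcases ((h b hb c hc).mp hbc).2 with k2 | k2 | k2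
    · exact h3.1 k2
    · exact h1.2.1 k2
    · exact h1.2.2 (k1.trans k2)

lemma cellRule_no_C4pat (h : CellRule G s f k) (ha : a ∈ s) (hb : b ∈ s) (hc : c ∈ s)
    (hd : d ∈ s) : ¬ C4pat G a b c d := by
  rintro ⟨hab, hbc, hcd, hda, hac, hbd, hac', hbd'⟩
  have h1 : ¬(f a = k ∨ f c = k ∨ f a = f c) := fun hh => hac ((h a ha c hc).mpr ⟨hac', hh⟩)
  have h3 : ¬(f b = k ∨ f d = k ∨ f b = f d) := fun hh => hbd ((h b hb d hd).mpr ⟨hbd', hh⟩)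
  push_neg at h1 h3
  rcases ((h a ha b hb).mp hab).2 with k1 | k1 | k1
  · exact h1.1 k1
  · exact h3.1 k1
  · rcases ((h b hb c hc).mp hbc).2 with k2 | k2 | k2
    · exact h3.1 k2
    · exact h1.2.1 k2
    · exact h1.2.2 (k1.trans k2)

lemma cellRule_no_dartPat (h : CellRule G s f k) (ha : a ∈ s) (hb : b ∈ s) (hc : c ∈ s)
    (hd : d ∈ s) (he : e ∈ s) : ¬ dartPat G a b c d e := by
  rintro ⟨h01, h02, h03, h12, h13, h04, n23, n14, n24, n34, d23, d14, d24, d34⟩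
  have h1 : ¬(f c = k ∨ f d = k ∨ f c = f d) := fun hh => n23 ((h c hc d hd).mpr ⟨d23, hh⟩)
  have h2 : ¬(f b = k ∨ f e = k ∨ f b = f e) := fun hh => n14 ((h b hb e he).mpr ⟨d14, hh⟩)
  push_neg at h1 h2
  rcases ((h b hb c hc).mp h12).2 with k1 | k1 | k1
  · exact h2.1 k1
  · exact h1.1 k1
  · rcases ((h b hb d hd).mp h13).2 with k2 | k2 | k2
    · exact h2.1 k2
    · exact h1.2.1 k2
    · exact h1.2.2 (k1.symm.trans k2)

end cellfree
lemma cellRule_of_cliqueStar {s : Set V} (h : IsCliqueStar (G.induce s)) :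
    ∃ (f : V → Set V) (k : Set V), CellRule G s f k := by
  rcases h with htop | ⟨K, Ls, hKne, hLsne, hLne, hunion, hdKL, hdLL, hKcl, hLcl, hKLs, hLLs⟩
  · refine ⟨fun _ => ∅, ∅, ?_⟩
    intro x hx y hy
    have : (G.induce s).Adj ⟨x, hx⟩ ⟨y, hy⟩ ↔ G.Adj x y := Iff.rfl
    rw [← this, htop]
    simp [Subtype.ext_iff]
  · -- the cell function on the subtype
    have hcell : ∀ z : ↥s, z ∉ K → ∃ L, L ∈ Ls ∧ z ∈ L := by
      intro z hz
      have hzu : z ∈ K ∪ ⋃₀ Ls := by rw [hunion]; trivial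
      rcases hzu with hzK | hzL
      · exact absurd hzK hz
      · obtain ⟨L, hL, hzL⟩ := hzL
        exact ⟨L, hL, hzL⟩
    classical
    set g : ↥s → Set ↥s := fun z => if hz : z ∈ K then K else (hcell z hz).choose with hg
    have gK : ∀ z (hz : z ∈ K), g z = K := by intro z hz; simp [hg, hz]
    have gL : ∀ z (hz : z ∉ K), g z ∈ Ls ∧ z ∈ g z := by
      intro z hz; simp only [hg, dif_neg hz]; exact (hcell z hz).choose_spec
    have gself : ∀ z, z ∈ g z := by
      intro z
      by_cases hz : z ∈ K
      · rw [gK z hz]; exact hz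
      · exact (gL z hz).2
    have gKiff : ∀ z, g z = K ↔ z ∈ K := by
      intro z
      constructor
      · intro hh
        by_cases hz : z ∈ K
        · exact hz
        · obtain ⟨hmem, hzin⟩ := gL z hz
          rw [hh] at hzin
          exact absurd hzin hz
      · exact gK z
    have key : ∀ z w : ↥s, (G.induce s).Adj z w ↔ (z ≠ w ∧ (g z = K ∨ g w = K ∨ g z = g w)) := by
      intro z w
      constructor
      · intro hzw
        refine ⟨hzw.ne, ?_⟩
        by_cases hz : z ∈ K
        · exact Or.inl (gK z hz)
        by_cases hw : w ∈ K
        · exact Or.inr (Or.inl (gK w hw))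
        · refine Or.inr (Or.inr ?_)
          by_contra hne
          exact hLLs (g z) (gL z hz).1 (g w) (gL w hw).1 hne z (gself z) w (gself w) hzw
      · rintro ⟨hne, hor | hor | hor⟩
        · have hz : z ∈ K := (gKiff z).mp hor
          by_cases hw : w ∈ K
          · exact hKcl hz hw hne
          · exact hKLs z hz w ⟨g w, (gL w hw).1, gself w⟩
        · have hw : w ∈ K := (gKiff w).mp hor
          by_cases hz : z ∈ K
          · exact hKcl hz hw hne
          · exact ((G.induce s).adj_comm w z).mp (hKLs w hw z ⟨g z, (gL z hz).1, gself z⟩)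
        · by_cases hz : z ∈ K
          · have hw : w ∈ K := (gKiff w).mp (hor.symm.trans (gK z hz))
            exact hKcl hz hw hne
          · have := hLcl (g z) (gL z hz).1
            exact this (gself z) (by rw [hor]; exact gself w) hne
    -- transfer to V
    refine ⟨fun x => if hx : x ∈ s then Subtype.val '' g ⟨x, hx⟩ else ∅, Subtype.val '' K, ?_⟩
    intro x hx y hy
    have hinj : Function.Injective (Subtype.val : ↥s → V) := Subtype.coe_injective
    have him : ∀ A B : Set ↥s, Subtype.val '' A = Subtype.val '' B ↔ A = B := fun A B =>
      (Set.image_eq_image hinj)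
    have hadj : (G.induce s).Adj ⟨x, hx⟩ ⟨y, hy⟩ ↔ G.Adj x y := Iff.rfl
    rw [← hadj, key ⟨x, hx⟩ ⟨y, hy⟩]
    simp only [dif_pos hx, dif_pos hy, him]
    constructor
    · rintro ⟨hne, hh⟩
      exact ⟨fun hxy => hne (Subtype.ext hxy), hh⟩
    · rintro ⟨hne, hh⟩
      exact ⟨fun hzw => hne (congrArg Subtype.val hzw), hh⟩

section structure_thm
variable {U : Type*} {H : SimpleGraph U}

lemma walk_to_distance_two {y w : U} (p : H.Walk w y) (hwy : w ≠ y) (hadj : ¬ H.Adj y w) :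
    ∃ t w', H.Adj y t ∧ H.Adj t w' ∧ ¬ H.Adj y w' ∧ w' ≠ y := by
  induction p with
  | nil => exact absurd rfl hwy
  | @cons a b c h q ih =>
    by_cases hb : b = c
    · subst hb
      exact absurd h.symm hadj
    by_cases hyb : H.Adj c b
    · exact ⟨b, a, hyb, h.symm, hadj, hwy⟩
    · exact ih hb hyb

lemma exists_P3_of_walk {x z : U} (p : H.Walk x z) (hxz : ¬ H.Adj x z) (hne : x ≠ z) :
    ∃ a b c, H.Adj a b ∧ H.Adj b c ∧ ¬ H.Adj a c ∧ a ≠ c := by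
  induction p with
  | nil => exact absurd rfl hne
  | @cons a b c h q ih =>
    by_cases hb : b = c
    · subst hb
      exact absurd h hxz
    by_cases hbz : H.Adj b c
    · exact ⟨a, b, c, h, hbz, hxz, hne⟩
    · exact ih hbz hb

variable (hP4 : ∀ a b c d, ¬ P4pat H a b c d) (hC4 : ∀ a b c d, ¬ C4pat H a b c d)
  (hdart : ∀ a b c d e, ¬ dartPat H a b c d e)

include hP4 hC4 in
lemma aux1 {w x y z : U} (hwx : H.Adj w x) (hxy : H.Adj x y) (hyz : H.Adj y z)
    (hwy : ¬ H.Adj w y) (hxz : ¬ H.Adj x z) (hwy' : w ≠ y) (hxz' : x ≠ z) : False := by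
  have hwz' : w ≠ z := by
    rintro rfl
    exact hwy hyz.symm
  by_cases hwz : H.Adj w z
  · exact hC4 w x y z ⟨hwx, hxy, hyz, hwz.symm, hwy, hxz, hwy', hxz'⟩
  · exact hP4 w x y z ⟨hwx, hxy, hyz, hwy, hwz, hxz, hwy', hwz', hxz'⟩

include hP4 hC4 hdart in
lemma center_universal (hpre : H.Preconnected) {x y z : U}
    (hxy : H.Adj x y) (hyz : H.Adj y z) (hxz : ¬ H.Adj x z) (hxz' : x ≠ z) :
    ∀ w, w ≠ y → H.Adj y w := by
  intro w hwy
  by_contra hyw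
  obtain ⟨p⟩ := hpre w y
  obtain ⟨t, w₂, hyt, htw, hyw₂, hw₂y⟩ := walk_to_distance_two p hwy hyw
  have hw₂x : w₂ ≠ x := by
    rintro rfl
    exact hyw₂ hxy.symm
  have hw₂z : w₂ ≠ z := by
    rintro rfl
    exact hyw₂ hyz
  have hnwy : ¬ H.Adj w₂ y := fun hh => hyw₂ hh.symm
  by_cases htx : t = x
  · subst htx
    exact aux1 hP4 hC4 htw.symm hxy hyz hnwy hxz hw₂y hxz'
  by_cases htz : t = z
  · subst htz
    exact aux1 hP4 hC4 htw.symm hyz.symm hxy.symm hnwy (fun hh => hxz hh.symm) hw₂y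
      (Ne.symm hxz')
  by_cases hatx : H.Adj t x
  · by_cases hatz : H.Adj t z
    · by_cases hwx : H.Adj w₂ x
      · exact aux1 hP4 hC4 hwx hxy hyz hnwy hxz hw₂y hxz'
      · by_cases hwz : H.Adj w₂ z
        · exact aux1 hP4 hC4 hwz hyz.symm hxy.symm hnwy (fun hh => hxz hh.symm) hw₂y
            (Ne.symm hxz')
        · refine hdart t y x z w₂ ⟨hyt.symm, hatx, hatz, hxy.symm, hyz, htw, hxz, hyw₂,
            fun hh => hwx hh.symm, fun hh => hwz hh.symm, hxz', Ne.symm hw₂y,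
            Ne.symm hw₂x, Ne.symm hw₂z⟩
    · by_cases hwz : H.Adj w₂ z
      · exact aux1 hP4 hC4 hwz hyz.symm hxy.symm hnwy (fun hh => hxz hh.symm) hw₂y
          (Ne.symm hxz')
      · exact hP4 w₂ t y z ⟨htw.symm, hyt.symm, hyz, hnwy, hwz, hatz, hw₂y, hw₂z, htz⟩
  · by_cases hwx : H.Adj w₂ x
    · exact aux1 hP4 hC4 hwx hxy hyz hnwy hxz hw₂y hxz'
    · exact hP4 w₂ t y x ⟨htw.symm, hyt.symm, hxy.symm, hnwy, hwx, hatx, hw₂y, hw₂x, htx⟩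

include hP4 hC4 hdart in
lemma cliqueStar_of_noPat (hpre : H.Preconnected) : IsCliqueStar H := by
  by_cases htop : H = ⊤
  · exact Or.inl htop
  right
  -- a non-adjacent pair exists
  obtain ⟨x₀, z₀, hx₀z₀, hne₀⟩ : ∃ x z, ¬ H.Adj x z ∧ x ≠ z := by
    by_contra hh
    push_neg at hh
    apply htop
    ext a b
    simp only [SimpleGraph.top_adj]
    exact ⟨fun h => h.ne, fun h => by_contra fun hn => h (hh a b hn)⟩
  -- the set of universal vertices
  set K : Set U := {v | ∀ w, w ≠ v → H.Adj v w} with hK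
  obtain ⟨p⟩ := hpre x₀ z₀
  obtain ⟨a, b, c, hab, hbc, hac, hac'⟩ := exists_P3_of_walk p hx₀z₀ hne₀
  have hbK : b ∈ K := by
    intro w hw
    exact center_universal hP4 hC4 hdart hpre hab hbc hac hac' w hw
  have hx₀K : x₀ ∉ K := fun hh => hx₀z₀ (hh z₀ (Ne.symm hne₀))
  -- the cells
  set Lset : U → Set U := fun x => {y | y ∉ K ∧ (y = x ∨ H.Adj x y)} with hLdef
  have hself : ∀ x, x ∉ K → x ∈ Lset x := fun x hx => ⟨hx, Or.inl rfl⟩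
  have E1 : ∀ x y, x ∉ K → y ∉ K → H.Adj x y → Lset x ⊆ Lset y := by
    intro x y hx hy hxy z hz
    obtain ⟨hzK, hz⟩ := hz
    rcases hz with rfl | hz
    · exact ⟨hzK, Or.inr hxy.symm⟩
    by_cases hzy : z = y
    · exact ⟨hzK, Or.inl hzy⟩
    by_cases hyz : H.Adj y z
    · exact ⟨hzK, Or.inr hyz⟩
    · exfalso
      apply hx
      intro w hw
      exact center_universal hP4 hC4 hdart hpre hxy.symm hz hyz
        (fun hh => hzy hh.symm) w hw
  have E : ∀ x y, x ∉ K → y ∉ K → (y = x ∨ H.Adj x y) → Lset x = Lset y := by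
    intro x y hx hy hor
    rcases hor with rfl | hxy
    · rfl
    · exact Set.Subset.antisymm (E1 x y hx hy hxy) (E1 y x hy hx hxy.symm)
  have Emem : ∀ x y, x ∉ K → y ∈ Lset x → Lset x = Lset y := by
    intro x y hx hy
    exact E x y hx hy.1 hy.2
  refine ⟨K, Lset '' {x | x ∉ K}, ⟨b, hbK⟩, ⟨Lset x₀, ⟨x₀, hx₀K, rfl⟩⟩, ?_, ?_, ?_, ?_, ?_, ?_,
    ?_, ?_⟩
  · rintro L ⟨x, hx, rfl⟩
    exact ⟨x, hself x hx⟩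
  · ext v
    simp only [Set.mem_union, Set.mem_univ, iff_true]
    by_cases hv : v ∈ K
    · exact Or.inl hv
    · exact Or.inr ⟨Lset v, ⟨v, hv, rfl⟩, hself v hv⟩
  · rintro L ⟨x, hx, rfl⟩
    rw [Set.disjoint_left]
    intro a haK haL
    exact haL.1 haK
  · rintro L₁ ⟨x1, hx1, rfl⟩ L₂ ⟨x2, hx2, rfl⟩ hne
    rw [Set.disjoint_left]
    intro a ha1 ha2
    exact hne ((Emem x1 a hx1 ha1).trans (Emem x2 a hx2 ha2).symm)
  · intro u hu w hw huw
    exact hu w (Ne.symm huw)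
  · rintro L ⟨x, hx, rfl⟩
    intro u hu w hw huw
    rcases hu.2 with rfl | hxu
    · rcases hw.2 with rfl | hxw
      · exact absurd rfl huw
      · exact hxw
    · rcases hw.2 with rfl | hxw
      · exact hxu.symm
      · by_contra huw'
        apply hx
        intro w' hw'
        exact center_universal hP4 hC4 hdart hpre hxu.symm hxw huw' huw w' hw'
  · intro u hu w hw
    obtain ⟨L, ⟨x, hx, rfl⟩, hwL⟩ := hw
    exact hu w (fun hh => hwL.1 (hh ▸ hu))
  · rintro L₁ ⟨x1, hx1, rfl⟩ L₂ ⟨x2, hx2, rfl⟩ hne u hu w hw huw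
    apply hne
    have e1 := Emem x1 u hx1 hu
    have e2 := Emem x2 w hx2 hw
    have e3 := E u w hu.1 hw.1 (Or.inr huw)
    rw [e1, e2, e3]
end structure_thm

section components
variable {c : G.ConnectedComponent}

lemma adj_mem_supp {a b : V} (ha : a ∈ c.supp) (hab : G.Adj a b) : b ∈ c.supp := by
  rw [SimpleGraph.ConnectedComponent.mem_supp_iff] at ha ⊢
  rw [← ha]
  exact SimpleGraph.ConnectedComponent.sound hab.symm.reachable

lemma reachable_induce_supp : ∀ {a b : V} (_ : G.Walk a b) (ha : a ∈ c.supp) (hb : b ∈ c.supp),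
    (G.induce c.supp).Reachable ⟨a, ha⟩ ⟨b, hb⟩ := by
  intro a b p
  induction p with
  | nil => intro ha hb; rfl
  | @cons a b' b h q ih =>
    intro ha hb
    have hb' : b' ∈ c.supp := adj_mem_supp ha h
    have hadj : (G.induce c.supp).Adj ⟨a, ha⟩ ⟨b', hb'⟩ := h
    exact hadj.reachable.trans (ih hb' hb)

lemma induce_supp_preconnected : (G.induce c.supp).Preconnected := by
  rintro ⟨a, ha⟩ ⟨b, hb⟩
  have hr : G.Reachable a b := by
    have h1 := (SimpleGraph.ConnectedComponent.mem_supp_iff c a).mp ha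
    have h2 := (SimpleGraph.ConnectedComponent.mem_supp_iff c b).mp hb
    exact SimpleGraph.ConnectedComponent.exact (h1.trans h2.symm)
  obtain ⟨p⟩ := hr
  exact reachable_induce_supp p ha hb

/-- patterns in an induced subgraph give patterns in the big graph -/
lemma P4pat_of_induce {s : Set V} {a b c d : ↥s} (h : P4pat (G.induce s) a b c d) :
    P4pat G a b c d := by
  obtain ⟨h1, h2, h3, h4, h5, h6, h7, h8, h9⟩ := h
  exact ⟨h1, h2, h3, h4, h5, h6, fun hh => h7 (Subtype.ext hh), fun hh => h8 (Subtype.ext hh),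
    fun hh => h9 (Subtype.ext hh)⟩

lemma C4pat_of_induce {s : Set V} {a b c d : ↥s} (h : C4pat (G.induce s) a b c d) :
    C4pat G a b c d :=
  ⟨h.1, h.2.1, h.2.2.1, h.2.2.2.1, h.2.2.2.2.1, h.2.2.2.2.2.1,
    fun hh => h.2.2.2.2.2.2.1 (Subtype.ext hh), fun hh => h.2.2.2.2.2.2.2 (Subtype.ext hh)⟩

lemma dartPat_of_induce {s : Set V} {a b c d e : ↥s} (h : dartPat (G.induce s) a b c d e) :
    dartPat G a b c d e := by
  obtain ⟨h1, h2, h3, h4, h5, h6, h7, h8, h9, h10, h11, h12, h13, h14⟩ := h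
  exact ⟨h1, h2, h3, h4, h5, h6, h7, h8, h9, h10, fun hh => h11 (Subtype.ext hh),
    fun hh => h12 (Subtype.ext hh), fun hh => h13 (Subtype.ext hh), fun hh => h14 (Subtype.ext hh)⟩

/-- patterns in `G` whose vertices lie in `s` give patterns in the induced subgraph -/
lemma P4pat_to_induce {s : Set V} {a b c d : V} (h : P4pat G a b c d)
    (ha : a ∈ s) (hb : b ∈ s) (hc : c ∈ s) (hd : d ∈ s) :
    P4pat (G.induce s) ⟨a, ha⟩ ⟨b, hb⟩ ⟨c, hc⟩ ⟨d, hd⟩ := by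
  obtain ⟨h1, h2, h3, h4, h5, h6, h7, h8, h9⟩ := h
  exact ⟨h1, h2, h3, h4, h5, h6, fun hh => h7 (congrArg Subtype.val hh),
    fun hh => h8 (congrArg Subtype.val hh), fun hh => h9 (congrArg Subtype.val hh)⟩

lemma C4pat_to_induce {s : Set V} {a b c d : V} (h : C4pat G a b c d)
    (ha : a ∈ s) (hb : b ∈ s) (hc : c ∈ s) (hd : d ∈ s) :
    C4pat (G.induce s) ⟨a, ha⟩ ⟨b, hb⟩ ⟨c, hc⟩ ⟨d, hd⟩ := by
  obtain ⟨h1, h2, h3, h4, h5, h6, h7, h8⟩ := h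
  exact ⟨h1, h2, h3, h4, h5, h6, fun hh => h7 (congrArg Subtype.val hh),
    fun hh => h8 (congrArg Subtype.val hh)⟩

lemma dartPat_to_induce {s : Set V} {a b c d e : V} (h : dartPat G a b c d e)
    (ha : a ∈ s) (hb : b ∈ s) (hc : c ∈ s) (hd : d ∈ s) (he : e ∈ s) :
    dartPat (G.induce s) ⟨a, ha⟩ ⟨b, hb⟩ ⟨c, hc⟩ ⟨d, hd⟩ ⟨e, he⟩ := by
  obtain ⟨h1, h2, h3, h4, h5, h6, h7, h8, h9, h10, h11, h12, h13, h14⟩ := h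
  exact ⟨h1, h2, h3, h4, h5, h6, h7, h8, h9, h10, fun hh => h11 (congrArg Subtype.val hh),
    fun hh => h12 (congrArg Subtype.val hh), fun hh => h13 (congrArg Subtype.val hh),
    fun hh => h14 (congrArg Subtype.val hh)⟩

lemma noPat_induce {s : Set V} (h : NoPat G) : NoPat (G.induce s) := by
  refine ⟨fun a b c d hp => h.1 a b c d (P4pat_of_induce hp),
    fun a b c d hp => h.2.1 a b c d (C4pat_of_induce hp),
    fun a b c d e hp => h.2.2 a b c d e (dartPat_of_induce hp)⟩

end components

lemma noPat_cliqueStar (h : NoPat G) (c : G.ConnectedComponent) :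
    IsCliqueStar (G.induce c.supp) := by
  have h' := noPat_induce (s := c.supp) h
  exact cliqueStar_of_noPat h'.1 h'.2.1 h'.2.2 induce_supp_preconnected

lemma cliqueStar_noPat (h : ∀ c : G.ConnectedComponent, IsCliqueStar (G.induce c.supp)) :
    NoPat G := by
  refine ⟨?_, ?_, ?_⟩
  · intro a b c d hp
    obtain ⟨f, k, hcell⟩ := cellRule_of_cliqueStar (h (G.connectedComponentMk a))
    have ha : a ∈ (G.connectedComponentMk a).supp := rfl
    have hb := adj_mem_supp ha hp.1
    have hc := adj_mem_supp hb hp.2.1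
    have hd := adj_mem_supp hc hp.2.2.1
    exact cellRule_no_P4pat hcell ha hb hc hd hp
  · intro a b c d hp
    obtain ⟨f, k, hcell⟩ := cellRule_of_cliqueStar (h (G.connectedComponentMk a))
    have ha : a ∈ (G.connectedComponentMk a).supp := rfl
    have hb := adj_mem_supp ha hp.1
    have hc := adj_mem_supp hb hp.2.1
    have hd := adj_mem_supp hc hp.2.2.1
    exact cellRule_no_C4pat hcell ha hb hc hd hp
  · intro a b c d e hp
    obtain ⟨f, k, hcell⟩ := cellRule_of_cliqueStar (h (G.connectedComponentMk a))
    have ha : a ∈ (G.connectedComponentMk a).supp := rfl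
    have hb := adj_mem_supp ha hp.1
    have hc := adj_mem_supp ha hp.2.1
    have hd := adj_mem_supp ha hp.2.2.1
    have he := adj_mem_supp ha hp.2.2.2.2.2.1
    exact cellRule_no_dartPat hcell ha hb hc hd he hp

lemma pivot_adj_outside (huv : G.Adj u v) {x : V} (hux : ¬ G.Adj u x) (hvx : ¬ G.Adj v x) :
    ∀ y, ((pivotEdge G u v).Adj x y ↔ G.Adj x y) := by
  intro y
  have hxu : x ≠ u := by rintro rfl; exact hvx huv.symm
  have hxv : x ≠ v := by rintro rfl; exact hux huv
  by_cases hxy : x = y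
  · subst hxy; simp [SimpleGraph.irrefl]
  by_cases hyu : u = y
  · subst hyu
    rw [(pivotEdge G u v).adj_comm x u, pivot_adj_left huv hxu hxv, G.adj_comm x u]
    constructor
    · intro hh; exact absurd hh hvx
    · intro hh; exact absurd hh hux
  by_cases hyv : v = y
  · subst hyv
    rw [(pivotEdge G u v).adj_comm x v, pivot_adj_right huv hxu hxv, G.adj_comm x v]
    constructor
    · intro hh; exact absurd hh hux
    · intro hh; exact absurd hh hvx
  · rw [pivot_adj_other huv hxu hxv (Ne.symm hyu) (Ne.symm hyv)]
    simp only [Xor']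
    constructor
    · rintro ⟨-, ⟨h1, -⟩ | ⟨h1, -⟩⟩
      · exact h1
      · exact absurd h1.1 (by tauto)
    · intro hh
      exact ⟨hxy, Or.inl ⟨hh, fun hc => (by tauto : ¬ (G.Adj u x ∨ G.Adj v x)) hc.1⟩⟩

lemma pivot_supp_closed (huv : G.Adj u v) {x y : V}
    (hxy : (pivotEdge G u v).Adj x y) :
    (x ∈ (G.connectedComponentMk u).supp ↔ y ∈ (G.connectedComponentMk u).supp) := by
  set s := (G.connectedComponentMk u).supp
  have hu : u ∈ s := rfl
  have hv : v ∈ s := adj_mem_supp hu huv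
  have key : ∀ z w : V, z ∉ s → (pivotEdge G u v).Adj z w → w ∉ s := by
    intro z w hz hzw hw
    have hux : ¬ G.Adj u z := fun hh => hz (adj_mem_supp hu hh)
    have hvx : ¬ G.Adj v z := fun hh => hz (adj_mem_supp hv hh)
    have : G.Adj z w := (pivot_adj_outside huv hux hvx w).mp hzw
    exact hz (adj_mem_supp hw this.symm)
  constructor
  · intro hx
    by_contra hy
    exact key y x hy hxy.symm hx
  · intro hy
    by_contra hx
    exact key x y hx hxy hy

lemma noPat_pivot (h : NoPat G) (huv : G.Adj u v) : NoPat (pivotEdge G u v) := by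
  set s := (G.connectedComponentMk u).supp with hs
  have hu : u ∈ s := rfl
  have hv : v ∈ s := adj_mem_supp hu huv
  obtain ⟨f, k, hcell⟩ := cellRule_of_cliqueStar (noPat_cliqueStar h (G.connectedComponentMk u))
  obtain ⟨k', hcell'⟩ := cellRule_pivot hcell hu hv huv
  have houts : ∀ z, z ∉ s → ∀ w, ((pivotEdge G u v).Adj z w ↔ G.Adj z w) := by
    intro z hz w
    exact pivot_adj_outside huv (fun hh => hz (adj_mem_supp hu hh))
      (fun hh => hz (adj_mem_supp hv hh)) w
  refine ⟨?_, ?_, ?_⟩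
  · intro a b c d hp
    by_cases ha : a ∈ s
    · have hb := (pivot_supp_closed huv hp.1).mp ha
      have hc := (pivot_supp_closed huv hp.2.1).mp hb
      have hd := (pivot_supp_closed huv hp.2.2.1).mp hc
      exact cellRule_no_P4pat hcell' ha hb hc hd hp
    · have hb : b ∉ s := fun hh => ha ((pivot_supp_closed huv hp.1).mpr hh)
      have hc : c ∉ s := fun hh => hb ((pivot_supp_closed huv hp.2.1).mpr hh)
      obtain ⟨p1, p2, p3, p4, p5, p6, p7, p8, p9⟩ := hp
      exact h.1 a b c d ⟨(houts a ha b).mp p1, (houts b hb c).mp p2, (houts c hc d).mp p3,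
        fun hh => p4 ((houts a ha c).mpr hh), fun hh => p5 ((houts a ha d).mpr hh),
        fun hh => p6 ((houts b hb d).mpr hh), p7, p8, p9⟩
  · intro a b c d hp
    by_cases ha : a ∈ s
    · have hb := (pivot_supp_closed huv hp.1).mp ha
      have hc := (pivot_supp_closed huv hp.2.1).mp hb
      have hd := (pivot_supp_closed huv hp.2.2.1).mp hc
      exact cellRule_no_C4pat hcell' ha hb hc hd hp
    · have hb : b ∉ s := fun hh => ha ((pivot_supp_closed huv hp.1).mpr hh)
      have hc : c ∉ s := fun hh => hb ((pivot_supp_closed huv hp.2.1).mpr hh)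
      obtain ⟨p1, p2, p3, p4, p5, p6, p7, p8⟩ := hp
      exact h.2.1 a b c d ⟨(houts a ha b).mp p1, (houts b hb c).mp p2, (houts c hc d).mp p3,
        ((houts a ha d).mp (p4.symm)).symm,
        fun hh => p5 ((houts a ha c).mpr hh), fun hh => p6 ((houts b hb d).mpr hh), p7, p8⟩
  · intro a b c d e hp
    by_cases ha : a ∈ s
    · have hb := (pivot_supp_closed huv hp.1).mp ha
      have hc := (pivot_supp_closed huv hp.2.1).mp ha
      have hd := (pivot_supp_closed huv hp.2.2.1).mp ha
      have he := (pivot_supp_closed huv hp.2.2.2.2.2.1).mp ha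
      exact cellRule_no_dartPat hcell' ha hb hc hd he hp
    · have hb : b ∉ s := fun hh => ha ((pivot_supp_closed huv hp.1).mpr hh)
      have hc : c ∉ s := fun hh => ha ((pivot_supp_closed huv hp.2.1).mpr hh)
      have hd : d ∉ s := fun hh => ha ((pivot_supp_closed huv hp.2.2.1).mpr hh)
      obtain ⟨p1, p2, p3, p4, p5, p6, p7, p8, p9, p10, p11, p12, p13, p14⟩ := hp
      exact h.2.2 a b c d e ⟨(houts a ha b).mp p1, (houts a ha c).mp p2, (houts a ha d).mp p3,
        (houts b hb c).mp p4, (houts b hb d).mp p5, (houts a ha e).mp p6,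
        fun hh => p7 ((houts c hc d).mpr hh), fun hh => p8 ((houts b hb e).mpr hh),
        fun hh => p9 ((houts c hc e).mpr hh), fun hh => p10 ((houts d hd e).mpr hh),
        p11, p12, p13, p14⟩
lemma noPat_pivotEquiv {G G' : SimpleGraph V} (h : PivotEquiv G G') (hn : NoPat G) :
    NoPat G' := by
  induction h with
  | refl => exact hn
  | tail hsteps hstep ih =>
    obtain ⟨u, v, huv, rfl⟩ := hstep
    exact noPat_pivot ih huv

lemma noPat_iso {W : Type*} {H : SimpleGraph W} (e : G ≃g H) (h : NoPat G) : NoPat H := by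
  have adj : ∀ a b : W, G.Adj (e.symm a) (e.symm b) ↔ H.Adj a b := fun a b =>
    e.symm.map_rel_iff
  have inj : ∀ a b : W, e.symm a = e.symm b → a = b := fun a b hh => e.symm.injective hh
  refine ⟨?_, ?_, ?_⟩
  · rintro a b c d ⟨p1, p2, p3, p4, p5, p6, p7, p8, p9⟩
    exact h.1 (e.symm a) (e.symm b) (e.symm c) (e.symm d)
      ⟨(adj _ _).mpr p1, (adj _ _).mpr p2, (adj _ _).mpr p3,
        fun hh => p4 ((adj _ _).mp hh), fun hh => p5 ((adj _ _).mp hh),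
        fun hh => p6 ((adj _ _).mp hh), fun hh => p7 (inj _ _ hh), fun hh => p8 (inj _ _ hh),
        fun hh => p9 (inj _ _ hh)⟩
  · rintro a b c d ⟨p1, p2, p3, p4, p5, p6, p7, p8⟩
    exact h.2.1 (e.symm a) (e.symm b) (e.symm c) (e.symm d)
      ⟨(adj _ _).mpr p1, (adj _ _).mpr p2, (adj _ _).mpr p3, (adj _ _).mpr p4,
        fun hh => p5 ((adj _ _).mp hh), fun hh => p6 ((adj _ _).mp hh),
        fun hh => p7 (inj _ _ hh), fun hh => p8 (inj _ _ hh)⟩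
  · rintro a b c d f ⟨p1, p2, p3, p4, p5, p6, p7, p8, p9, p10, p11, p12, p13, p14⟩
    exact h.2.2 (e.symm a) (e.symm b) (e.symm c) (e.symm d) (e.symm f)
      ⟨(adj _ _).mpr p1, (adj _ _).mpr p2, (adj _ _).mpr p3, (adj _ _).mpr p4,
        (adj _ _).mpr p5, (adj _ _).mpr p6,
        fun hh => p7 ((adj _ _).mp hh), fun hh => p8 ((adj _ _).mp hh),
        fun hh => p9 ((adj _ _).mp hh), fun hh => p10 ((adj _ _).mp hh),
        fun hh => p11 (inj _ _ hh), fun hh => p12 (inj _ _ hh), fun hh => p13 (inj _ _ hh),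
        fun hh => p14 (inj _ _ hh)⟩

lemma notNoPat_pathGraph : ¬ NoPat (SimpleGraph.pathGraph 4) := by
  intro h
  refine h.1 0 1 2 3 ⟨?_, ?_, ?_, ?_, ?_, ?_, ?_, ?_, ?_⟩ <;>
    first
      | (rw [SimpleGraph.pathGraph_adj]; decide)
      | (rw [show ∀ p : Prop, (¬p) = (p → False) from fun _ => rfl]; rw [SimpleGraph.pathGraph_adj]; decide)
      | decide

lemma notNoPat_cycleGraph : ¬ NoPat (SimpleGraph.cycleGraph 4) := by
  intro h
  refine h.2.1 0 1 2 3 ⟨?_, ?_, ?_, ?_, ?_, ?_, ?_, ?_⟩ <;>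
    first
      | (rw [SimpleGraph.cycleGraph_adj]; decide)
      | (rw [show ∀ p : Prop, (¬p) = (p → False) from fun _ => rfl]; rw [SimpleGraph.cycleGraph_adj]; decide)
      | decide

lemma notNoPat_elim (h : ¬ NoPat G) :
    (∃ a b c d, P4pat G a b c d) ∨ (∃ a b c d, C4pat G a b c d) ∨
      (∃ a b c d e, dartPat G a b c d e) := by
  by_contra hh
  push_neg at hh
  exact h ⟨hh.1, hh.2.1, hh.2.2⟩

lemma hpm_P4_of_pat {G' : SimpleGraph V} (hequiv : PivotEquiv G G')
    (hp : ∃ a b c d, P4pat G' a b c d) : HasPivotMinor G (SimpleGraph.pathGraph 4) := by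
  obtain ⟨s, hiso⟩ := hasInduced_P4_iff.mpr hp
  exact ⟨s, G', hequiv, hiso⟩

lemma hpm_C4_of_pat {G' : SimpleGraph V} (hequiv : PivotEquiv G G')
    (hp : ∃ a b c d, C4pat G' a b c d) : HasPivotMinor G (SimpleGraph.cycleGraph 4) := by
  obtain ⟨s, hiso⟩ := hasInduced_C4_iff.mpr hp
  exact ⟨s, G', hequiv, hiso⟩

lemma hpm_P4_iff : HasPivotMinor G (SimpleGraph.pathGraph 4) ↔ ¬ NoPat G := by
  constructor
  · rintro ⟨s, G', hequiv, ⟨iso⟩⟩ hn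
    exact notNoPat_pathGraph (noPat_iso iso (noPat_induce (noPat_pivotEquiv hequiv hn)))
  · intro hn
    rcases notNoPat_elim hn with ⟨a, b, c, d, hp⟩ | ⟨a, b, c, d, hp⟩ | ⟨a, b, c, d, e, hp⟩
    · -- P4 pattern: pivot once to C4, pivot again to P4? no: direct
      exact hpm_P4_of_pat Relation.ReflTransGen.refl ⟨a, b, c, d, hp⟩
    · -- C4 pattern: one pivot gives P4
      have hab : G.Adj a b := hp.1
      exact hpm_P4_of_pat (Relation.ReflTransGen.single ⟨a, b, hab, rfl⟩)
        ⟨c, a, b, d, C4pat_pivot hp⟩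
    · -- dart pattern: two pivots
      have h01 : G.Adj a b := hp.1
      have hc4 : C4pat (pivotEdge G a b) a c e d := dartPat_pivot hp
      have h02 : (pivotEdge G a b).Adj a c := hc4.1
      have hstep2 : PivotEquiv G (pivotEdge (pivotEdge G a b) a c) :=
        Relation.ReflTransGen.head ⟨a, b, h01, rfl⟩ (Relation.ReflTransGen.single ⟨a, c, h02, rfl⟩)
      exact hpm_P4_of_pat hstep2 ⟨e, a, c, d, C4pat_pivot hc4⟩

lemma hpm_C4_iff : HasPivotMinor G (SimpleGraph.cycleGraph 4) ↔ ¬ NoPat G := by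
  constructor
  · rintro ⟨s, G', hequiv, ⟨iso⟩⟩ hn
    exact notNoPat_cycleGraph (noPat_iso iso (noPat_induce (noPat_pivotEquiv hequiv hn)))
  · intro hn
    rcases notNoPat_elim hn with ⟨a, b, c, d, hp⟩ | ⟨a, b, c, d, hp⟩ | ⟨a, b, c, d, e, hp⟩
    · have hbc : G.Adj b c := hp.2.1
      exact hpm_C4_of_pat (Relation.ReflTransGen.single ⟨b, c, hbc, rfl⟩)
        ⟨a, c, b, d, P4pat_pivot hp⟩
    · exact hpm_C4_of_pat Relation.ReflTransGen.refl ⟨a, b, c, d, hp⟩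
    · have h01 : G.Adj a b := hp.1
      exact hpm_C4_of_pat (Relation.ReflTransGen.single ⟨a, b, h01, rfl⟩)
        ⟨a, c, e, d, dartPat_pivot hp⟩


end aux

/-- For every finite simple graph `G` the following are equivalent:
(i) no pivot-minor isomorphic to `P₄`; (ii) no pivot-minor isomorphic to `C₄`;
(iii) no induced subgraph isomorphic to `P₄`, `C₄` or the dart; (iv) every connected
component of `G` is a clique-star. -/
theorem P4_pivotMinorFree_iff {V : Type*} [Fintype V] (G : SimpleGraph V) :
    (¬ HasPivotMinor G (SimpleGraph.pathGraph 4) ↔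
      ¬ HasPivotMinor G (SimpleGraph.cycleGraph 4)) ∧
    (¬ HasPivotMinor G (SimpleGraph.cycleGraph 4) ↔
      (¬ HasInducedSubgraphIso G (SimpleGraph.pathGraph 4) ∧
       ¬ HasInducedSubgraphIso G (SimpleGraph.cycleGraph 4) ∧
       ¬ HasInducedSubgraphIso G dart)) ∧
    ((¬ HasInducedSubgraphIso G (SimpleGraph.pathGraph 4) ∧
       ¬ HasInducedSubgraphIso G (SimpleGraph.cycleGraph 4) ∧
       ¬ HasInducedSubgraphIso G dart) ↔
      ∀ c : G.ConnectedComponent, IsCliqueStar (G.induce c.supp)) := by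

  have e1 : ¬ HasPivotMinor G (SimpleGraph.pathGraph 4) ↔ NoPat G := by
    rw [hpm_P4_iff]; exact not_not
  have e2 : ¬ HasPivotMinor G (SimpleGraph.cycleGraph 4) ↔ NoPat G := by
    rw [hpm_C4_iff]; exact not_not
  have e3 : (¬ HasInducedSubgraphIso G (SimpleGraph.pathGraph 4) ∧
       ¬ HasInducedSubgraphIso G (SimpleGraph.cycleGraph 4) ∧
       ¬ HasInducedSubgraphIso G dart) ↔ NoPat G := by
    rw [hasInduced_P4_iff, hasInduced_C4_iff, hasInduced_dart_iff]
    push_neg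
    constructor
    · rintro ⟨h1, h2, h3⟩
      exact ⟨h1, h2, h3⟩
    · rintro ⟨h1, h2, h3⟩
      exact ⟨h1, h2, h3⟩
  have e4 : NoPat G ↔ ∀ c : G.ConnectedComponent, IsCliqueStar (G.induce c.supp) :=
    ⟨fun h c => noPat_cliqueStar h c, cliqueStar_noPat⟩
  exact ⟨e1.trans e2.symm, e2.trans e3.symm, e3.trans e4⟩
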